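/- Let A = ⟨Q, Σ⟩ be a DFA such that the graph Γ₁(A) is strongly connected. Then A is completely reachable; more precisely, for every non-empty subset P ⊆ Q there is a word w that is a product of words of defect 1 (possibly the empty product, i.e., the empty word) such that P = Q·w. -/

import Mathlib

/-!
Framework: complete deterministic finite automata, reachability of subsets,
defect/excluded/duplicate states of words, and the layered graphs
`Γ₁(A), Γ₂(A), …` of Bondar & Volkov, "A Characterization of Completely
Reachable Automata".
-/

/-- The action of a word on a state: `q · w`. -/
def actWord {Q σ : Type*} (δ : Q → σ → Q) (w : List σ) (q : Q) : Q :=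
  w.foldl δ q

/-- The image of a set of states under a word: `P · w`. -/
def actSet {Q σ : Type*} (δ : Q → σ → Q) (w : List σ) (P : Set Q) : Set Q :=
  actWord δ w '' P

/-- The set `excl(w) = Q \ Q·w` of excluded states of the word `w`. -/
def excl {Q σ : Type*} (δ : Q → σ → Q) (w : List σ) : Set Q :=
  Set.univ \ actSet δ w Set.univ

/-- The defect of the word `w`, i.e. `|Q \ Q·w|`. -/
noncomputable def defect {Q σ : Type*} (δ : Q → σ → Q) (w : List σ) : ℕ :=
  (excl δ w).ncard

/-- The set `dupl(w)` of duplicate states of the word `w`. -/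
def dupl {Q σ : Type*} (δ : Q → σ → Q) (w : List σ) : Set Q :=
  {p | ∃ q₁ q₂ : Q, q₁ ≠ q₂ ∧ actWord δ w q₁ = p ∧ actWord δ w q₂ = p}

/-- A subset `P ⊆ Q` is reachable if `P = Q·w` for some word `w`. -/
def reachableSubset {Q σ : Type*} (δ : Q → σ → Q) (P : Set Q) : Prop :=
  ∃ w : List σ, actSet δ w Set.univ = P

/-- A DFA is completely reachable if every nonempty subset of states is reachable. -/
def completelyReachable {Q σ : Type*} (δ : Q → σ → Q) : Prop :=
  ∀ P : Set Q, P.Nonempty → reachableSubset δ P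

/-- A directed graph given by a vertex set and an edge relation. -/
structure DGraph (V : Type*) where
  verts : Set V
  edge : V → V → Prop

/-- Reachability by a directed path in a graph. -/
def GReach {V : Type*} (G : DGraph V) : V → V → Prop :=
  Relation.ReflTransGen G.edge

/-- A graph is strongly connected if each of its vertices is reachable from
any other one. -/
def StronglyConnected {V : Type*} (G : DGraph V) : Prop :=
  ∀ u ∈ G.verts, ∀ v ∈ G.verts, GReach G u v

/-- The strongly connected component of the vertex `v`: all vertices mutually
reachable with `v`. -/
def scc {V : Type*} (G : DGraph V) (v : V) : Set V :=
  {u | u ∈ G.verts ∧ GReach G u v ∧ GReach G v u}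

/-- Vertices of the layered graphs: states (`Sum.inl`) and subsets of states
(`Sum.inr`). -/
abbrev Vtx (Q : Type*) := Q ⊕ Set Q

/-- The support of a set of vertices: the states belonging to it. -/
def support {Q : Type*} (S : Set (Vtx Q)) : Set Q :=
  {q | Sum.inl q ∈ S}

/-- The graph `Γ₁(A)`: vertices are the states, and there is an edge
`(excl w, dupl w)` for each word `w` of defect 1. -/
def Gamma1 {Q σ : Type*} (δ : Q → σ → Q) : DGraph (Vtx Q) where
  verts := Set.range Sum.inl
  edge := fun u v => ∃ q p : Q, u = Sum.inl q ∧ v = Sum.inl p ∧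
    ∃ w : List σ, defect δ w = 1 ∧ excl δ w = {q} ∧ p ∈ dupl δ w

/-- `Qnext G k`: the collection of the supports of all SCCs of `G` of rank
at least `k` (this is the set `Q_k` when `G = Γ_{k-1}(A)`). -/
def Qnext {Q : Type*} (G : DGraph (Vtx Q)) (k : ℕ) : Set (Set Q) :=
  {C | ∃ v ∈ G.verts, C = support (scc G v) ∧ k ≤ C.ncard}

/-- One step of the iterative construction: from `G = Γ_{k-1}(A)` build
`Γ_k(A)` by adding the new vertices `Q_k`, the inclusion edges `I_k`, and the
edges `E_k` enforced by words of defect `k`. -/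
def step {Q σ : Type*} (δ : Q → σ → Q) (G : DGraph (Vtx Q)) (k : ℕ) :
    DGraph (Vtx Q) where
  verts := G.verts ∪ Sum.inr '' Qnext G k
  edge := fun u v =>
    G.edge u v ∨
    (∃ C ∈ Qnext G k, v = Sum.inr C ∧
      ((∃ q : Q, u = Sum.inl q ∧ q ∈ C) ∨
       (∃ D : Set Q, u = Sum.inr D ∧ Sum.inr D ∈ G.verts ∧ D ⊂ C))) ∨
    (∃ C ∈ Qnext G k, ∃ p : Q, u = Sum.inr C ∧ v = Sum.inl p ∧
      ∃ w : List σ, defect δ w = k ∧ excl δ w ⊆ C ∧ p ∈ dupl δ w)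

/-- The layered graphs `Γ_k(A)` (with `Γ_0 := Γ_1`). -/
def Gamma {Q σ : Type*} (δ : Q → σ → Q) : ℕ → DGraph (Vtx Q)
  | 0 => Gamma1 δ
  | 1 => Gamma1 δ
  | (k + 2) => step δ (Gamma δ (k + 1)) (k + 2)

/-- The FAILURE condition at step `k`: every SCC of `Γ_k(A)` has rank at
most `k`. -/
def failsAt {Q σ : Type*} (δ : Q → σ → Q) (k : ℕ) : Prop :=
  ∀ v ∈ (Gamma δ k).verts, (support (scc (Gamma δ k) v)).ncard ≤ k

/-- The iterative construction stops at step `k` (so `Γ(A) = Γ_k(A)`):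
`k` is the first index at which `Γ_k(A)` is strongly connected (SUCCESS) or
every SCC of `Γ_k(A)` has rank at most `k` (FAILURE). -/
def stopsAt {Q σ : Type*} (δ : Q → σ → Q) (k : ℕ) : Prop :=
  1 ≤ k ∧ (StronglyConnected (Gamma δ k) ∨ failsAt δ k) ∧
    ∀ j, 1 ≤ j → j < k → ¬ StronglyConnected (Gamma δ j) ∧ ¬ failsAt δ j

section Aux
variable {Q σ : Type*}

lemma actWord_append (δ : Q → σ → Q) (a b : List σ) (q : Q) :
    actWord δ (a ++ b) q = actWord δ b (actWord δ a q) := by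
  simp [actWord, List.foldl_append]

lemma actSet_append (δ : Q → σ → Q) (a b : List σ) (P : Set Q) :
    actSet δ (a ++ b) P = actSet δ b (actSet δ a P) := by
  simp only [actSet, Set.image_image, actWord_append]

lemma reach_cross {r : Vtx Q → Vtx Q → Prop}
    (hshape : ∀ u v, r u v → ∃ a b : Q, u = Sum.inl a ∧ v = Sum.inl b)
    (P : Set Q) {x y : Vtx Q}
    (hr : Relation.ReflTransGen r x y) :
    ∀ q p : Q, x = Sum.inl q → y = Sum.inl p → q ∉ P → p ∈ P →
      ∃ q' p' : Q, q' ∉ P ∧ p' ∈ P ∧ r (Sum.inl q') (Sum.inl p') := by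
  induction hr using Relation.ReflTransGen.head_induction_on with
  | refl =>
    intro q p hq hp hqP hpP
    rw [hq] at hp
    cases hp
    exact absurd hpP hqP
  | head hedge _ ih =>
    rename_i a c _
    intro q p hq hp hqP hpP
    obtain ⟨a', b', ha, hb⟩ := hshape a c hedge
    subst ha hb
    cases hq
    by_cases hb' : b' ∈ P
    · exact ⟨q, b', hqP, hb', hedge⟩
    · exact ih b' p rfl hp hb' hpP

end Aux

/-- Theorem 1: if `Γ₁(A)` is strongly connected, then `A` is
completely reachable; more precisely, every non-empty subset `P ⊆ Q` satisfies
`P = Q·w` for some product `w` of words of defect 1. -/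
theorem gamma1_strongly_connected_completely_reachable
    {Q σ : Type*} [Fintype Q] (δ : Q → σ → Q)
    (h : StronglyConnected (Gamma1 δ)) :
    completelyReachable δ ∧
      ∀ P : Set Q, P.Nonempty →
        ∃ ws : List (List σ), (∀ u ∈ ws, defect δ u = 1) ∧
          actSet δ ws.flatten Set.univ = P := by
  classical
  have key : ∀ n : ℕ, ∀ P : Set Q, P.Nonempty → Pᶜ.ncard ≤ n →
      ∃ ws : List (List σ), (∀ u ∈ ws, defect δ u = 1) ∧
        actSet δ ws.flatten Set.univ = P := by
    intro n
    induction n with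
    | zero =>
      intro P hP hc
      have : Pᶜ = ∅ := by
        have := (Pᶜ).toFinite
        rw [← Set.ncard_eq_zero this] at *
        omega
      have hPu : P = Set.univ := by
        rw [← Set.compl_empty, ← this, compl_compl]
      exact ⟨[], by simp, by simp [actSet, actWord, hPu]; exact Set.eq_univ_of_forall fun x => ⟨x, rfl⟩⟩
    | succ n ih =>
      intro P hP hc
      by_cases hPc : Pᶜ.Nonempty
      swap
      · have hPu : P = Set.univ := by
          rw [Set.not_nonempty_iff_eq_empty] at hPc
          rw [← Set.compl_empty, ← hPc, compl_compl]
        exact ⟨[], by simp, by simp [actSet, actWord, hPu]; exact Set.eq_univ_of_forall fun x => ⟨x, rfl⟩⟩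
      obtain ⟨q0, hq0⟩ := hPc
      obtain ⟨p0, hp0⟩ := hP
      have hr := h (Sum.inl q0) ⟨q0, rfl⟩ (Sum.inl p0) ⟨p0, rfl⟩
      have hshape : ∀ u v : Vtx Q, (Gamma1 δ).edge u v →
          ∃ a b : Q, u = Sum.inl a ∧ v = Sum.inl b := by
        rintro u v ⟨a, b, hu, hv, -⟩
        exact ⟨a, b, hu, hv⟩
      obtain ⟨q, p, hq, hp, hedge⟩ :=
        reach_cross hshape P hr q0 p0 rfl rfl hq0 hp0
      obtain ⟨q', p', hq', hp', w, hw1, hwe, hwd⟩ := hedge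
      cases hq'; cases hp'
      set f := actWord δ w with hf
      have himg : f '' Set.univ = {q}ᶜ := by
        have : (f '' Set.univ)ᶜ = {q} := by
          rw [← hwe]; simp [excl, actSet, Set.compl_eq_univ_diff]; rfl
        rw [← compl_compl (f '' Set.univ), this]
      obtain ⟨q1, q2, hne, hq1, hq2⟩ := hwd
      rw [← hf] at hq1 hq2
      have himg2 : f '' ({q1}ᶜ) = {q}ᶜ := by
        apply Set.Subset.antisymm
        · rw [← himg]; exact Set.image_mono (Set.subset_univ _)
        · intro y hy
          rw [← himg] at hy
          obtain ⟨x, -, hx⟩ := hy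
          by_cases hxq1 : x = q1
          · exact ⟨q2, by simp [Ne.symm hne], by rw [hq2, ← hq1, ← hxq1, hx]⟩
          · exact ⟨x, by simp [hxq1], hx⟩
      have hsing : ∀ a : Q, ({a}ᶜ : Set Q).ncard = (Set.univ : Set Q).ncard - 1 := by
        intro a
        rw [Set.compl_eq_univ_diff]
        exact Set.ncard_diff_singleton_of_mem (Set.mem_univ a)
      have hinj : Set.InjOn f ({q1}ᶜ) :=
        Set.injOn_of_ncard_image_eq (by rw [himg2, hsing, hsing])
      set P' := f ⁻¹' P with hP'
      have hq1P' : q1 ∈ P' := by simp [hP', Set.mem_preimage, hq1, hp]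
      have hsub : P'ᶜ ⊆ {q1}ᶜ := by
        intro x hx
        simp only [Set.mem_compl_iff, Set.mem_singleton_iff]
        rintro rfl
        exact hx hq1P'
      have himgsub : f '' (P'ᶜ) ⊆ Pᶜ \ {q} := by
        rintro y ⟨x, hx, rfl⟩
        refine ⟨hx, ?_⟩
        have : f x ∈ f '' Set.univ := ⟨x, Set.mem_univ x, rfl⟩
        rw [himg] at this
        exact this
      have hlt : P'ᶜ.ncard < Pᶜ.ncard := by
        calc P'ᶜ.ncard = (f '' P'ᶜ).ncard := (Set.ncard_image_of_injOn (hinj.mono hsub)).symm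
          _ ≤ (Pᶜ \ {q}).ncard := Set.ncard_le_ncard himgsub (Set.toFinite _)
          _ < Pᶜ.ncard := Set.ncard_diff_singleton_lt_of_mem hq (Set.toFinite _)
      have hP'ne : P'.Nonempty := ⟨q1, hq1P'⟩
      obtain ⟨ws, hws1, hws2⟩ := ih P' hP'ne (by omega)
      refine ⟨ws ++ [w], ?_, ?_⟩
      · intro u hu
        rcases List.mem_append.mp hu with h1 | h2
        · exact hws1 u h1
        · simp at h2; subst h2; exact hw1
      · have hPsub : P ⊆ Set.range f := by
          rw [← Set.image_univ, himg]
          intro x hx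
          simp only [Set.mem_compl_iff, Set.mem_singleton_iff]
          rintro rfl
          exact hq hx
        have : f '' P' = P := Set.image_preimage_eq_of_subset hPsub
        rw [List.flatten_append]
        simp only [List.flatten, List.append_nil]
        rw [actSet_append, hws2]
        simpa [actSet] using this
  have main : ∀ P : Set Q, P.Nonempty →
      ∃ ws : List (List σ), (∀ u ∈ ws, defect δ u = 1) ∧
        actSet δ ws.flatten Set.univ = P := fun P hP => key (Pᶜ.ncard) P hP le_rfl
  refine ⟨?_, main⟩
  intro P hP
  obtain ⟨ws, -, hws⟩ := main P hP
  exact ⟨ws.flatten, hws⟩
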